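/- arXiv:1909.13511 — 8 statements merged into one kernel-verified Lean document; each statement's English description precedes it below -/
import Mathlib

section
/- Let A, B be real symmetric positive semidefinite n×n matrices with Ker(A) = Ker(B) = W and α⟨Bu,u⟩ ≤ ⟨Au,u⟩ ≤ β⟨Bu,u⟩ for all u, with α, β > 0. Consider the RSS scheme (u^{k+1} - u^k)/Δt + τB(u^{k+1} - u^k) + Au^k = 0. If τ ≥ β/2, then for every Δt > 0 the scheme is energy-stable: ⟨A u^{k+1}, u^{k+1}⟩ ≤ ⟨A u^k, u^k⟩ for all k. -/
open Matrix

theorem stmt_3 {n : ℕ} (A B : Matrix (Fin n) (Fin n) ℝ)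
    (hA : A.PosSemidef) (hB : B.PosSemidef)
    (W : Submodule ℝ (Fin n → ℝ))
    (hkerA : ∀ v, A.mulVec v = 0 ↔ v ∈ W) (hkerB : ∀ v, B.mulVec v = 0 ↔ v ∈ W)
    (α β : ℝ) (hα : 0 < α) (hβ : 0 < β)
    (hspec : ∀ v : Fin n → ℝ,
      α * (B.mulVec v ⬝ᵥ v) ≤ A.mulVec v ⬝ᵥ v ∧ A.mulVec v ⬝ᵥ v ≤ β * (B.mulVec v ⬝ᵥ v))
    (τ Δt : ℝ) (hτ : β / 2 ≤ τ) (hΔt : 0 < Δt)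
    (u : ℕ → Fin n → ℝ)
    (hscheme : ∀ k, Δt⁻¹ • (u (k + 1) - u k)
      + τ • B.mulVec (u (k + 1) - u k) + A.mulVec (u k) = 0) :
    ∀ k : ℕ, A.mulVec (u (k + 1)) ⬝ᵥ u (k + 1) ≤ A.mulVec (u k) ⬝ᵥ u k := by
  intro k
  set d : Fin n → ℝ := u (k + 1) - u k with hd
  have hsym : Aᵀ = A := hA.1
  have h0 : Δt⁻¹ * (d ⬝ᵥ d) + τ * (B.mulVec d ⬝ᵥ d) + A.mulVec (u k) ⬝ᵥ d = 0 := by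
    have := congrArg (fun v => v ⬝ᵥ d) (hscheme k)
    simpa [add_dotProduct, smul_dotProduct, smul_eq_mul, ← hd] using this
  have hdd : 0 ≤ d ⬝ᵥ d := by simpa using dotProduct_star_self_nonneg d
  have hBd : 0 ≤ B.mulVec d ⬝ᵥ d := by simpa [dotProduct_comm] using hB.dotProduct_mulVec_nonneg d
  have hAdβ : A.mulVec d ⬝ᵥ d ≤ β * (B.mulVec d ⬝ᵥ d) := (hspec d).2
  have hsymAd : A.mulVec d ⬝ᵥ u k = A.mulVec (u k) ⬝ᵥ d := by
    rw [dotProduct_comm, dotProduct_mulVec, ← mulVec_transpose, hsym]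
  have hu : u (k + 1) = u k + d := by simp [hd]
  rw [hu, mulVec_add, add_dotProduct, dotProduct_add, dotProduct_add, hsymAd]
  nlinarith [mul_nonneg (le_of_lt (inv_pos.2 hΔt)) hdd]
end

section
/- Let A, B be real symmetric positive semidefinite n×n matrices with Ker(A) = Ker(B) = W and α⟨Bu,u⟩ ≤ ⟨Au,u⟩ ≤ β⟨Bu,u⟩ for all u, with α, β > 0. Consider the RSS scheme (u^{k+1} - u^k)/Δt + τB(u^{k+1} - u^k) + Au^k = 0 with 0 ≤ τ < β/2. If 0 < Δt < 2 / ((1 - 2τ/β) ρ(A)), where ρ(A) is the spectral radius of A, then ⟨A u^{k+1}, u^{k+1}⟩ ≤ ⟨A u^k, u^k⟩ for all k. -/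
open Matrix

lemma rayleigh_aux {n : ℕ} (A : Matrix (Fin n) (Fin n) ℝ) (hA : A.IsHermitian) (ρ : ℝ)
    (hub : ∀ r : ℝ, (∃ v : Fin n → ℝ, v ≠ 0 ∧ A.mulVec v = r • v) → r ≤ ρ)
    (w : Fin n → ℝ) : A.mulVec w ⬝ᵥ w ≤ ρ * (w ⬝ᵥ w) := by
  have hev : ∀ i, hA.eigenvalues i ≤ ρ := by
    intro i
    apply hub
    refine ⟨⇑(hA.eigenvectorBasis i), ?_, hA.mulVec_eigenvectorBasis i⟩
    have h1 := hA.eigenvectorBasis.orthonormal.1 i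
    intro h
    have h0 : hA.eigenvectorBasis i = 0 := by
      apply (WithLp.equiv 2 _).injective; simpa using h
    rw [h0] at h1; simp at h1
  set V : Matrix (Fin n) (Fin n) ℝ := (hA.eigenvectorUnitary : Matrix (Fin n) (Fin n) ℝ) with hV
  have hst : star V = Vᵀ := by
    ext i j; simp [Matrix.star_apply]
  set y : Fin n → ℝ := (star V).mulVec w with hy
  have hVV : V * star V = 1 := mem_unitaryGroup_iff.mp hA.eigenvectorUnitary.2
  have hw1 : A.mulVec w ⬝ᵥ w = ∑ i, hA.eigenvalues i * (y i)^2 := by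
    conv_lhs => rw [hA.spectral_theorem, Unitary.conjStarAlgAut_apply]
    rw [← mulVec_mulVec, ← mulVec_mulVec, dotProduct_comm, dotProduct_mulVec,
      ← mulVec_transpose, ← hst]
    simp [dotProduct, mulVec_diagonal, pow_two]
    exact Finset.sum_congr rfl fun i _ => by rw [hy]; ring
  have hw2 : w ⬝ᵥ w = ∑ i, (y i)^2 := by
    have : ∑ i, (y i)^2 = y ⬝ᵥ y := by simp [dotProduct, pow_two]
    rw [this, hy, dotProduct_mulVec, hst, vecMul_transpose, ← hst, mulVec_mulVec, hVV, one_mulVec]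
  rw [hw1, hw2, Finset.mul_sum]
  exact Finset.sum_le_sum fun i _ => mul_le_mul_of_nonneg_right (hev i) (sq_nonneg _)

theorem stmt_4 {n : ℕ} (A B : Matrix (Fin n) (Fin n) ℝ)
    (hA : A.PosSemidef) (hB : B.PosSemidef)
    (W : Submodule ℝ (Fin n → ℝ))
    (hkerA : ∀ v, A.mulVec v = 0 ↔ v ∈ W) (hkerB : ∀ v, B.mulVec v = 0 ↔ v ∈ W)
    (α β : ℝ) (hα : 0 < α) (hβ : 0 < β)
    (hspec : ∀ v : Fin n → ℝ,
      α * (B.mulVec v ⬝ᵥ v) ≤ A.mulVec v ⬝ᵥ v ∧ A.mulVec v ⬝ᵥ v ≤ β * (B.mulVec v ⬝ᵥ v))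
    (ρA : ℝ) (hρ : IsGreatest {r : ℝ | ∃ v : Fin n → ℝ, v ≠ 0 ∧ A.mulVec v = r • v} ρA)
    (τ Δt : ℝ) (hτ0 : 0 ≤ τ) (hτ : τ < β / 2)
    (hΔt : 0 < Δt) (hΔt' : Δt < 2 / ((1 - 2 * τ / β) * ρA))
    (u : ℕ → Fin n → ℝ)
    (hscheme : ∀ k, Δt⁻¹ • (u (k + 1) - u k)
      + τ • B.mulVec (u (k + 1) - u k) + A.mulVec (u k) = 0) :
    ∀ k : ℕ, A.mulVec (u (k + 1)) ⬝ᵥ u (k + 1) ≤ A.mulVec (u k) ⬝ᵥ u k := by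
  -- setup constants
  set c : ℝ := 1 - 2 * τ / β with hc_def
  have hc : 0 < c := by
    rw [hc_def]
    have h2 : 2 * τ / β < 1 := by
      rw [div_lt_one hβ]; linarith
    linarith
  have hcρ : 0 < c * ρA := by
    by_contra h
    push_neg at h
    have : 2 / (c * ρA) ≤ 0 := div_nonpos_of_nonneg_of_nonpos (by norm_num) h
    linarith
  have hΔtc : Δt * (c * ρA) < 2 := by
    rw [← lt_div_iff₀ hcρ] at *
    exact hΔt'
  have hAT : Aᵀ = A := by
    ext i j
    have := congrFun (congrFun hA.1 i) j
    simpa [conjTranspose_apply] using this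
  intro k
  set w : Fin n → ℝ := u (k + 1) - u k with hw_def
  have hu : u (k + 1) = u k + w := by simp [hw_def]
  have hAuk : A.mulVec (u k) = -(Δt⁻¹ • w + τ • B.mulVec w) :=
    eq_neg_of_add_eq_zero_right (hscheme k)
  set a : ℝ := A.mulVec w ⬝ᵥ w with ha_def
  set b : ℝ := B.mulVec w ⬝ᵥ w with hb_def
  set s : ℝ := w ⬝ᵥ w with hs_def
  -- nonnegativity facts
  have hs : 0 ≤ s := by
    rw [hs_def]
    exact Finset.sum_nonneg fun i _ => mul_self_nonneg _
  have hb0 : 0 ≤ b := by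
    have := hB.dotProduct_mulVec_nonneg w
    rw [hb_def, dotProduct_comm]
    simpa using this
  have ha0 : 0 ≤ a := by
    have := hA.dotProduct_mulVec_nonneg w
    rw [ha_def, dotProduct_comm]
    simpa using this
  have haβ : a ≤ β * b := (hspec w).2
  have hray : a ≤ ρA * s :=
    rayleigh_aux A hA.1 ρA (fun r hr => hρ.2 hr) w
  -- symmetric cross term
  have hsymm : A.mulVec w ⬝ᵥ u k = A.mulVec (u k) ⬝ᵥ w := by
    rw [dotProduct_comm, dotProduct_mulVec, ← mulVec_transpose, hAT]
  have hcross : A.mulVec (u k) ⬝ᵥ w = -(Δt⁻¹ * s + τ * b) := by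
    rw [hAuk]
    simp [add_dotProduct, smul_dotProduct, hs_def, hb_def]
  -- energy identity
  have key : A.mulVec (u (k + 1)) ⬝ᵥ u (k + 1)
      = A.mulVec (u k) ⬝ᵥ u k + a - 2 * τ * b - 2 * Δt⁻¹ * s := by
    rw [hu, mulVec_add, add_dotProduct, dotProduct_add, dotProduct_add, hsymm, hcross]
    rw [ha_def]
    ring
  rw [key]
  -- a - 2τb - 2Δt⁻¹ s ≤ 0
  have h1 : a - 2 * τ * b ≤ c * a := by
    have hbge : a / β ≤ b := (div_le_iff₀' hβ).mpr haβ
    have : 2 * τ * (a / β) ≤ 2 * τ * b := by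
      apply mul_le_mul_of_nonneg_left hbge (by linarith)
    have hca : c * a = a - 2 * τ / β * a := by rw [hc_def]; ring
    rw [hca]
    have : 2 * τ / β * a = 2 * τ * (a / β) := by ring
    linarith
  have h2 : c * a ≤ c * (ρA * s) := mul_le_mul_of_nonneg_left hray hc.le
  have h3 : c * (ρA * s) ≤ 2 * Δt⁻¹ * s := by
    have h4 : c * ρA ≤ 2 * Δt⁻¹ := by
      rw [show (2 : ℝ) * Δt⁻¹ = 2 / Δt by ring, le_div_iff₀ hΔt]
      nlinarith
    calc c * (ρA * s) = (c * ρA) * s := by ring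
      _ ≤ (2 * Δt⁻¹) * s := mul_le_mul_of_nonneg_right h4 hs
  clear_value a b s c w
  linarith
end

section
/- Let A, B be real symmetric positive semidefinite n×n matrices with Ker(A) = Ker(B) = W and α⟨Bu,u⟩ ≤ ⟨Au,u⟩ ≤ β⟨Bu,u⟩ for all u, with α, β > 0. Consider the stabilized Crank-Nicolson scheme u^{k+1} - u^k + (τΔt/2) B(u^{k+1} - u^k) + Δt A u^k = 0. If τ ≥ β, then the scheme satisfies ⟨A u^{k+1}, u^{k+1}⟩ ≤ ⟨A u^k, u^k⟩ for every Δt > 0; if τ < β, the same holds provided 0 < Δt < 2 / ((1 - τ/β) ρ(A)). -/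
open Matrix

/-- Quadratic form bound by the top eigenvalue. -/
lemma quad_le_top {n : ℕ} (A : Matrix (Fin n) (Fin n) ℝ) (hA : A.IsHermitian)
    (ρA : ℝ) (hρ : IsGreatest {r : ℝ | ∃ v : Fin n → ℝ, v ≠ 0 ∧ A.mulVec v = r • v} ρA)
    (d : Fin n → ℝ) : A.mulVec d ⬝ᵥ d ≤ ρA * (d ⬝ᵥ d) := by
  set M : Matrix (Fin n) (Fin n) ℝ := ρA • (1 : Matrix (Fin n) (Fin n) ℝ) - A with hMdef
  have hM : M.IsHermitian := by
    unfold Matrix.IsHermitian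
    rw [hMdef, conjTranspose_sub, conjTranspose_smul, conjTranspose_one, star_trivial, hA.eq]
  have hMps : M.PosSemidef := by
    apply hM.posSemidef_iff_eigenvalues_nonneg.mpr
    intro i
    set w : Fin n → ℝ := ⇑(hM.eigenvectorBasis i) with hw
    have hwne : w ≠ 0 := by
      intro h
      have := hM.eigenvectorBasis.orthonormal.ne_zero i
      apply this
      ext j
      exact congrFun h j
    have hMw : M.mulVec w = hM.eigenvalues i • w := hM.mulVec_eigenvectorBasis i
    have hAw : A.mulVec w = (ρA - hM.eigenvalues i) • w := by
      have hMw' : ρA • w - A.mulVec w = hM.eigenvalues i • w := by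
        rw [← hMw, hMdef, sub_mulVec, smul_mulVec, one_mulVec]
      have h2 : A.mulVec w = ρA • w - hM.eigenvalues i • w := by
        rw [← hMw']; abel
      rw [h2, sub_smul]
    have hmem : (ρA - hM.eigenvalues i) ∈
        {r : ℝ | ∃ v : Fin n → ℝ, v ≠ 0 ∧ A.mulVec v = r • v} := ⟨w, hwne, hAw⟩
    have := hρ.2 hmem
    show (0:ℝ) ≤ hM.eigenvalues i
    linarith
  have := hMps.re_dotProduct_nonneg d
  simp only [RCLike.re_to_real, star_trivial] at this
  have hdot : d ⬝ᵥ M.mulVec d = ρA * (d ⬝ᵥ d) - d ⬝ᵥ A.mulVec d := by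
    rw [hMdef, sub_mulVec, smul_mulVec, one_mulVec, dotProduct_sub, dotProduct_smul]
    simp [smul_eq_mul]
  have hsym : d ⬝ᵥ A.mulVec d = A.mulVec d ⬝ᵥ d := dotProduct_comm _ _
  rw [hdot, hsym] at this
  linarith

theorem stmt_5 {n : ℕ} (A B : Matrix (Fin n) (Fin n) ℝ)
    (hA : A.PosSemidef) (hB : B.PosSemidef)
    (W : Submodule ℝ (Fin n → ℝ))
    (hkerA : ∀ v, A.mulVec v = 0 ↔ v ∈ W) (hkerB : ∀ v, B.mulVec v = 0 ↔ v ∈ W)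
    (α β : ℝ) (hα : 0 < α) (hβ : 0 < β)
    (hspec : ∀ v : Fin n → ℝ,
      α * (B.mulVec v ⬝ᵥ v) ≤ A.mulVec v ⬝ᵥ v ∧ A.mulVec v ⬝ᵥ v ≤ β * (B.mulVec v ⬝ᵥ v))
    (ρA : ℝ) (hρ : IsGreatest {r : ℝ | ∃ v : Fin n → ℝ, v ≠ 0 ∧ A.mulVec v = r • v} ρA)
    (τ Δt : ℝ) (hτ0 : 0 ≤ τ) (hΔt : 0 < Δt)
    (hcond : β ≤ τ ∨ (τ < β ∧ Δt < 2 / ((1 - τ / β) * ρA)))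
    (u : ℕ → Fin n → ℝ)
    (hscheme : ∀ k, (u (k + 1) - u k)
      + (τ * Δt / 2) • B.mulVec (u (k + 1) - u k) + Δt • A.mulVec (u k) = 0) :
    ∀ k : ℕ, A.mulVec (u (k + 1)) ⬝ᵥ u (k + 1) ≤ A.mulVec (u k) ⬝ᵥ u k := by
  -- symmetry of the bilinear forms
  have hAsymm : ∀ x y : Fin n → ℝ, A.mulVec x ⬝ᵥ y = x ⬝ᵥ A.mulVec y := by
    intro x y
    conv_rhs => rw [dotProduct_mulVec, ← mulVec_transpose]
    rw [show Aᵀ = A by rw [← conjTranspose_eq_transpose_of_trivial]; exact hA.1]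
  intro k
  set d : Fin n → ℝ := u (k + 1) - u k with hd
  have hu1 : u (k + 1) = u k + d := by rw [hd]; abel
  have hsch := hscheme k
  rw [← hd] at hsch
  -- quantities
  set s : ℝ := d ⬝ᵥ d with hs
  set a : ℝ := A.mulVec d ⬝ᵥ d with ha
  set b : ℝ := B.mulVec d ⬝ᵥ d with hb
  have hs0 : 0 ≤ s := by
    rw [hs]
    exact Finset.sum_nonneg fun i _ => mul_self_nonneg _
  have ha0 : 0 ≤ a := by
    have := hA.re_dotProduct_nonneg d
    simp only [RCLike.re_to_real, star_trivial] at this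
    rw [ha, dotProduct_comm]; exact this
  have hb0 : 0 ≤ b := by
    have := hB.re_dotProduct_nonneg d
    simp only [RCLike.re_to_real, star_trivial] at this
    rw [hb, dotProduct_comm]; exact this
  -- from the scheme: Δt • A u_k = -(d + (τΔt/2) B d)
  have hAu : Δt • A.mulVec (u k) = -(d + (τ * Δt / 2) • B.mulVec d) := by
    have := hsch
    linear_combination (norm := (ext j; simp; ring_nf)) this
  have hdAu : Δt * (d ⬝ᵥ A.mulVec (u k)) = -(s + (τ * Δt / 2) * b) := by
    have h1 : d ⬝ᵥ (Δt • A.mulVec (u k)) = Δt * (d ⬝ᵥ A.mulVec (u k)) := by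
      rw [dotProduct_smul]; simp [smul_eq_mul]
    rw [← h1, hAu]
    rw [dotProduct_neg, dotProduct_add, dotProduct_smul]
    rw [hs, hb, dotProduct_comm d (B.mulVec d)]
    simp [smul_eq_mul]
  -- energy difference
  have hE : A.mulVec (u (k + 1)) ⬝ᵥ u (k + 1)
      = A.mulVec (u k) ⬝ᵥ u k + 2 * (d ⬝ᵥ A.mulVec (u k)) + a := by
    rw [hu1, mulVec_add, add_dotProduct, dotProduct_add, dotProduct_add]
    have h1 : A.mulVec (u k) ⬝ᵥ d = d ⬝ᵥ A.mulVec (u k) := dotProduct_comm _ _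
    have h2 : A.mulVec d ⬝ᵥ u k = d ⬝ᵥ A.mulVec (u k) := by
      rw [hAsymm d (u k), dotProduct_comm]
    rw [h1, h2, ha]
    ring
  have hdAu' : d ⬝ᵥ A.mulVec (u k) = (-(s + (τ * Δt / 2) * b)) / Δt := by
    field_simp at hdAu ⊢
    linarith
  rw [hE, hdAu']
  -- now a pure real-number inequality
  have haβb : a ≤ β * b := by
    have := (hspec d).2
    rw [← ha, ← hb] at this
    exact this
  have haρs : a ≤ ρA * s := by
    have := quad_le_top A hA.1 ρA hρ d
    rw [← ha, ← hs] at this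
    exact this
  rcases hcond with hc | ⟨hc1, hc2⟩
  · -- τ ≥ β : a - τ b ≤ 0
    have h1 : a - τ * b ≤ 0 := by nlinarith
    have h2 : 2 * ((-(s + τ * Δt / 2 * b)) / Δt) = (-2 * s) / Δt - τ * b := by
      field_simp
      ring
    rw [h2]
    have h3 : (-2 * s) / Δt ≤ 0 := div_nonpos_iff.mpr (Or.inr ⟨by linarith, hΔt.le⟩)
    linarith
  · -- τ < β
    set c : ℝ := (1 - τ / β) * ρA with hcdef
    have hc0 : 0 < c := by
      by_contra h
      push_neg at h
      have : (2:ℝ) / c ≤ 0 := div_nonpos_iff.mpr (Or.inl ⟨by norm_num, h⟩)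
      linarith
    have hcΔt : c * Δt < 2 := by
      rw [lt_div_iff₀ hc0] at hc2
      linarith
    -- a - τ b ≤ (1 - τ/β) a ≤ c s
    have hba : a / β ≤ b := by
      rw [div_le_iff₀ hβ]
      linarith [haβb]
    have h1 : a - τ * b ≤ (1 - τ / β) * a := by
      have : τ * (a / β) ≤ τ * b := mul_le_mul_of_nonneg_left hba hτ0
      have hτa : (τ / β) * a = τ * (a / β) := by ring
      nlinarith
    have h2 : (1 - τ / β) * a ≤ c * s := by
      rw [hcdef]
      have h3 : 0 ≤ 1 - τ / β := by
        have : τ / β < 1 := (div_lt_one hβ).mpr hc1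
        linarith
      calc (1 - τ / β) * a ≤ (1 - τ / β) * (ρA * s) := mul_le_mul_of_nonneg_left haρs h3
        _ = (1 - τ / β) * ρA * s := by ring
    have h4 : 2 * ((-(s + τ * Δt / 2 * b)) / Δt) = (-2 * s) / Δt - τ * b := by
      field_simp
      ring
    rw [h4]
    have h5 : c * s ≤ (2 / Δt) * s := by
      apply mul_le_mul_of_nonneg_right _ hs0
      rw [le_div_iff₀ hΔt]
      linarith
    have h6 : (2 / Δt) * s = -((-2 * s) / Δt) := by
      field_simp
    nlinarith [h1, h2, h5]
end

section
/- Let A be an n×n real matrix with Ker(A) = span{1} (where 1 = (1,...,1)ᵀ) such that I + ΔtA satisfies the discrete maximum principle (i.e. (I+ΔtA)^{-1} ≥ 0 entrywise), and let ε, Δt > 0. Define the splitting scheme: u* = (I + ΔtA)^{-1} u^k, then u^{k+1}_i = u*_i / sqrt(e^{-2Δt/ε²} + (u*_i)²(1 - e^{-2Δt/ε²})). If |u⁰_i| ≤ 1 for all i, then |u^k_i| ≤ 1 for all i and all k ≥ 0. -/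
open Matrix

theorem stmt_8 {n : ℕ} (A : Matrix (Fin n) (Fin n) ℝ) (Δt ε : ℝ)
    (hΔt : 0 < Δt) (hε : 0 < ε)
    (hker : ∀ v : Fin n → ℝ, A.mulVec v = 0 ↔ ∃ c : ℝ, v = fun _ => c)
    (hM : IsUnit (1 + Δt • A))
    (hMinv : ∀ i j, 0 ≤ ((1 + Δt • A)⁻¹) i j)
    (u : ℕ → Fin n → ℝ) (ustar : ℕ → Fin n → ℝ)
    (hstar : ∀ k, (1 + Δt • A).mulVec (ustar k) = u k)
    (hstep : ∀ k i, u (k + 1) i = ustar k i /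
      Real.sqrt (Real.exp (-2 * Δt / ε ^ 2)
        + (ustar k i) ^ 2 * (1 - Real.exp (-2 * Δt / ε ^ 2))))
    (hu0 : ∀ i, |u 0 i| ≤ 1) :
    ∀ k i, |u k i| ≤ 1 := by
  set M := (1 + Δt • A) with hMdef
  set a := Real.exp (-2 * Δt / ε ^ 2) with ha
  have ha0 : 0 < a := Real.exp_pos _
  have ha1 : a ≤ 1 := by
    apply le_of_lt
    apply Real.exp_lt_one_iff.mpr
    have : (0:ℝ) < ε ^ 2 := by positivity
    have : -2 * Δt < 0 := by linarith
    exact div_neg_of_neg_of_pos this ‹(0:ℝ) < ε ^ 2›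
  -- A * 1 = 0
  have hA1 : A.mulVec (fun _ => (1:ℝ)) = 0 := (hker _).mpr ⟨1, rfl⟩
  have hM1 : M.mulVec (fun _ => (1:ℝ)) = (fun _ => (1:ℝ)) := by
    funext i
    simp [hMdef, Matrix.add_mulVec, Matrix.smul_mulVec, hA1, Matrix.one_mulVec]
  have hMinv1 : M⁻¹.mulVec (fun _ => (1:ℝ)) = (fun _ => (1:ℝ)) := by
    have := congrArg (M⁻¹.mulVec) hM1
    rw [Matrix.mulVec_mulVec, Matrix.nonsing_inv_mul M ((Matrix.isUnit_iff_isUnit_det M).mp hM),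
      Matrix.one_mulVec] at this
    exact this.symm
  have hustar : ∀ k, ustar k = M⁻¹.mulVec (u k) := by
    intro k
    have := congrArg (M⁻¹.mulVec) (hstar k)
    rwa [Matrix.mulVec_mulVec, Matrix.nonsing_inv_mul M ((Matrix.isUnit_iff_isUnit_det M).mp hM),
      Matrix.one_mulVec] at this
  intro k
  induction k with
  | zero => exact hu0
  | succ k ih =>
    have hus : ∀ i, |ustar k i| ≤ 1 := by
      intro i
      have h1 : ustar k i = ∑ j, M⁻¹ i j * u k j := by
        rw [hustar k]; rfl
      calc |ustar k i| = |∑ j, M⁻¹ i j * u k j| := by rw [h1]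
        _ ≤ ∑ j, |M⁻¹ i j * u k j| := Finset.abs_sum_le_sum_abs _ _
        _ ≤ ∑ j, M⁻¹ i j * 1 := by
            apply Finset.sum_le_sum
            intro j _
            rw [abs_mul, abs_of_nonneg (hMinv i j)]
            exact mul_le_mul_of_nonneg_left (ih j) (hMinv i j)
        _ = (M⁻¹.mulVec (fun _ => (1:ℝ))) i := rfl
        _ = 1 := by rw [hMinv1]
    intro i
    rw [hstep k i]
    set x := ustar k i with hx
    have hx1 : x ^ 2 ≤ 1 := by
      have := sq_abs x ▸ pow_le_one₀ (abs_nonneg x) (hus i)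
      calc x ^ 2 = |x| ^ 2 := (sq_abs x).symm
        _ ≤ 1 := pow_le_one₀ (abs_nonneg x) (hus i)
    have hD : 0 < a + x ^ 2 * (1 - a) := by nlinarith [sq_nonneg x]
    have hDx : x ^ 2 ≤ a + x ^ 2 * (1 - a) := by nlinarith
    have hsq : |x| ≤ Real.sqrt (a + x ^ 2 * (1 - a)) := by
      rw [← Real.sqrt_sq_eq_abs]
      exact Real.sqrt_le_sqrt hDx
    rw [abs_div, abs_of_nonneg (Real.sqrt_nonneg _)]
    exact div_le_one_of_le₀ hsq (Real.sqrt_nonneg _)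
end

section
/- Let A, B be symmetric positive semidefinite n×n matrices with Ker(A) = Ker(B) = W and α⟨Bu,u⟩ ≤ ⟨Au,u⟩ ≤ β⟨Bu,u⟩ for all u (α, β > 0). Let f : ℝ → ℝ be C¹ with |f'| ≤ L, let F be a primitive of f, ε > 0, and define E(u) = (1/2)⟨Au,u⟩ + (1/ε²)Σᵢ F(uᵢ). Consider the RSS-IMEX scheme (u^{k+1}-u^k)/Δt + τB(u^{k+1}-u^k) + Au^k + (1/ε²)f(u^k) = 0 (f applied componentwise). If W = {0}, τ ≥ β/2, and (τ/β - 1/2)λ_min(A) - L/(2ε²) ≥ 0 (λ_min(A) the smallest eigenvalue of A), then E(u^{k+1}) ≤ E(u^k) for every Δt > 0 and every k. -/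
open Matrix

private lemma taylor_bd (f F : ℝ → ℝ) (L : ℝ) (hL0 : 0 ≤ L)
    (hF : ∀ x, HasDerivAt F (f x) x)
    (hlip : ∀ x y, |f x - f y| ≤ L * |x - y|) (a b : ℝ) :
    F b - F a ≤ f a * (b - a) + L / 2 * (b - a) ^ 2 := by
  set g : ℝ → ℝ := fun x => F x - f a * x - L / 2 * (x - a) ^ 2 with hgdef
  have hg : ∀ x, HasDerivAt g (f x - f a - L * (x - a)) x := by
    intro x
    have h1 : HasDerivAt (fun x : ℝ => f a * x) (f a) x := by
      simpa using (hasDerivAt_id x).const_mul (f a)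
    have h2 : HasDerivAt (fun x : ℝ => L / 2 * (x - a) ^ 2) (L * (x - a)) x := by
      have := (((hasDerivAt_id x).sub_const a).pow 2).const_mul (L / 2)
      refine this.congr_deriv ?_
      simp only [id_eq]
      ring
    exact ((hF x).sub h1).sub h2
  have hgd : Differentiable ℝ g := fun x => (hg x).differentiableAt
  have hderiv : ∀ x, deriv g x = f x - f a - L * (x - a) := fun x => (hg x).deriv
  have hkey : g b ≤ g a := by
    rcases le_total a b with hab | hab
    · have hanti : AntitoneOn g (Set.Icc a b) := by
        refine antitoneOn_of_deriv_nonpos (convex_Icc a b) hgd.continuous.continuousOn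
          hgd.differentiableOn ?_
        intro x hx
        rw [interior_Icc] at hx
        rw [hderiv]
        have h1 : |f x - f a| ≤ L * |x - a| := hlip x a
        have h2 : |x - a| = x - a := abs_of_nonneg (by linarith [hx.1])
        rw [h2] at h1
        have := le_of_abs_le h1
        linarith
      exact hanti (Set.left_mem_Icc.2 hab) (Set.right_mem_Icc.2 hab) hab
    · have hmono : MonotoneOn g (Set.Icc b a) := by
        refine monotoneOn_of_deriv_nonneg (convex_Icc b a) hgd.continuous.continuousOn
          hgd.differentiableOn ?_
        intro x hx
        rw [interior_Icc] at hx
        rw [hderiv]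
        have h1 : |f x - f a| ≤ L * |x - a| := hlip x a
        have h2 : |x - a| = a - x := by
          rw [abs_sub_comm]
          exact abs_of_nonneg (by linarith [hx.2])
        rw [h2] at h1
        have := neg_le_of_abs_le h1
        linarith
      exact hmono (Set.left_mem_Icc.2 hab) (Set.right_mem_Icc.2 hab) hab
  simp only [hgdef] at hkey
  nlinarith [hkey]


private lemma quad_lb {n : ℕ} (A : Matrix (Fin n) (Fin n) ℝ) (hA : A.IsHermitian) (lam : ℝ)
    (h : ∀ r : ℝ, (∃ v : Fin n → ℝ, v ≠ 0 ∧ A.mulVec v = r • v) → lam ≤ r)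
    (w : Fin n → ℝ) : lam * (w ⬝ᵥ w) ≤ A.mulVec w ⬝ᵥ w := by
  set M : Matrix (Fin n) (Fin n) ℝ := A - lam • (1 : Matrix (Fin n) (Fin n) ℝ) with hMdef
  have hM : M.IsHermitian := by
    unfold M
    unfold Matrix.IsHermitian at *
    rw [conjTranspose_sub, hA]
    congr 1
    simp [conjTranspose_smul]
  have hMmv : ∀ x : Fin n → ℝ, M.mulVec x = A.mulVec x - lam • x := by
    intro x
    unfold M
    rw [sub_mulVec, smul_mulVec, one_mulVec]
  have hpsd : M.PosSemidef := by
    refine hM.posSemidef_iff_eigenvalues_nonneg.mpr fun i => (?_ : (0 : ℝ) ≤ hM.eigenvalues i)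
    have hev := hM.mulVec_eigenvectorBasis i
    have hne : (⇑(hM.eigenvectorBasis i) : Fin n → ℝ) ≠ 0 := by
      have := hM.eigenvectorBasis.orthonormal.ne_zero i
      intro hc
      apply this
      ext j
      exact congrFun hc j
    have hAe : A.mulVec (⇑(hM.eigenvectorBasis i)) =
        (hM.eigenvalues i + lam) • (⇑(hM.eigenvectorBasis i)) := by
      have := hMmv (⇑(hM.eigenvectorBasis i))
      rw [hev] at this
      rw [eq_comm, sub_eq_iff_eq_add] at this
      rw [this, ← add_smul]
    have := h (hM.eigenvalues i + lam) ⟨_, hne, hAe⟩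
    linarith
  have h2 := hpsd.dotProduct_mulVec_nonneg w
  simp only [star_trivial] at h2
  rw [hMmv, dotProduct_sub, dotProduct_smul, smul_eq_mul, dotProduct_comm w (A.mulVec w)] at h2
  linarith

theorem stmt_9 {n : ℕ} (A B : Matrix (Fin n) (Fin n) ℝ)
    (hA : A.PosSemidef) (hB : B.PosSemidef)
    (hkerA : ∀ v : Fin n → ℝ, A.mulVec v = 0 → v = 0)
    (hkerB : ∀ v : Fin n → ℝ, B.mulVec v = 0 → v = 0)
    (α β : ℝ) (hα : 0 < α) (hβ : 0 < β)
    (hspec : ∀ v : Fin n → ℝ,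
      α * (B.mulVec v ⬝ᵥ v) ≤ A.mulVec v ⬝ᵥ v ∧ A.mulVec v ⬝ᵥ v ≤ β * (B.mulVec v ⬝ᵥ v))
    (f F : ℝ → ℝ) (L : ℝ)
    (hF : ∀ x, HasDerivAt F (f x) x)
    (hf : Differentiable ℝ f) (hL : ∀ x, |deriv f x| ≤ L)
    (ε τ Δt : ℝ) (hε : 0 < ε) (hΔt : 0 < Δt)
    (lamMin : ℝ) (hlam : IsLeast {r : ℝ | ∃ v : Fin n → ℝ, v ≠ 0 ∧ A.mulVec v = r • v} lamMin)
    (hτ : β / 2 ≤ τ)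
    (hcond : 0 ≤ (τ / β - 1 / 2) * lamMin - L / (2 * ε ^ 2))
    (u : ℕ → Fin n → ℝ)
    (hscheme : ∀ k, Δt⁻¹ • (u (k + 1) - u k)
      + τ • B.mulVec (u (k + 1) - u k) + A.mulVec (u k)
      + (1 / ε ^ 2) • (fun i => f (u k i)) = 0)
    (E : (Fin n → ℝ) → ℝ)
    (hE : ∀ v, E v = (1 / 2) * (A.mulVec v ⬝ᵥ v) + (1 / ε ^ 2) * ∑ i, F (v i)) :
    ∀ k : ℕ, E (u (k + 1)) ≤ E (u k) := by
  -- preliminaries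
  have hL0 : 0 ≤ L := le_trans (abs_nonneg _) (hL 0)
  have hlip : ∀ x y, |f x - f y| ≤ L * |x - y| := by
    have hnn : ∀ x, ‖deriv f x‖₊ ≤ L.toNNReal := by
      intro x
      rw [← NNReal.coe_le_coe, coe_nnnorm, Real.norm_eq_abs, Real.coe_toNNReal _ hL0]
      exact hL x
    have hlw := lipschitzWith_of_nnnorm_deriv_le hf hnn
    intro x y
    have := hlw.dist_le_mul x y
    rwa [Real.dist_eq, Real.dist_eq, Real.coe_toNNReal _ hL0] at this
  have hsym : ∀ x y : Fin n → ℝ, A.mulVec x ⬝ᵥ y = A.mulVec y ⬝ᵥ x := by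
    intro x y
    rw [dotProduct_comm, dotProduct_mulVec, ← mulVec_transpose]
    congr 1
    rw [← conjTranspose_eq_transpose_of_trivial, hA.1]
  intro k
  set a : Fin n → ℝ := u k with hadef
  set v : Fin n → ℝ := u (k + 1) - u k with hvdef
  have hb : u (k + 1) = a + v := by simp [hadef, hvdef]
  -- the scheme dotted with v
  have key : Δt⁻¹ * (v ⬝ᵥ v) + τ * (B.mulVec v ⬝ᵥ v) + A.mulVec a ⬝ᵥ v
      + (1 / ε ^ 2) * ((fun i => f (a i)) ⬝ᵥ v) = 0 := by
    have h0 := congrArg (fun w => w ⬝ᵥ v) (hscheme k)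
    simpa only [add_dotProduct, smul_dotProduct, smul_eq_mul, zero_dotProduct] using h0
  -- quadratic expansion
  have hexp : A.mulVec (a + v) ⬝ᵥ (a + v)
      = A.mulVec a ⬝ᵥ a + 2 * (A.mulVec a ⬝ᵥ v) + A.mulVec v ⬝ᵥ v := by
    rw [mulVec_add, add_dotProduct, dotProduct_add, dotProduct_add, hsym v a]
    ring
  -- Taylor bound on the potential sum
  have hsum : ∑ i, F ((a + v) i) - ∑ i, F (a i)
      ≤ ((fun i => f (a i)) ⬝ᵥ v) + L / 2 * (v ⬝ᵥ v) := by
    rw [← Finset.sum_sub_distrib]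
    have hle : ∀ i ∈ Finset.univ, F ((a + v) i) - F (a i)
        ≤ f (a i) * v i + L / 2 * (v i) ^ 2 := by
      intro i _
      have := taylor_bd f F L hL0 hF hlip (a i) ((a + v) i)
      simpa using this
    calc ∑ i, (F ((a + v) i) - F (a i)) ≤ ∑ i, (f (a i) * v i + L / 2 * (v i) ^ 2) :=
          Finset.sum_le_sum hle
      _ = ((fun i => f (a i)) ⬝ᵥ v) + L / 2 * (v ⬝ᵥ v) := by
          rw [Finset.sum_add_distrib, ← Finset.mul_sum]
          simp [dotProduct, pow_two, mul_comm]
  -- scalar abbreviations and inequalities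
  have hs0 : 0 ≤ v ⬝ᵥ v := by
    apply Finset.sum_nonneg
    intro i _
    exact mul_self_nonneg _
  have hbv0 : 0 ≤ B.mulVec v ⬝ᵥ v := by
    have := hB.dotProduct_mulVec_nonneg v
    simpa [dotProduct_comm] using this
  have hAβ : A.mulVec v ⬝ᵥ v ≤ β * (B.mulVec v ⬝ᵥ v) := (hspec v).2
  have hmin : lamMin * (v ⬝ᵥ v) ≤ A.mulVec v ⬝ᵥ v :=
    quad_lb A hA.1 lamMin (fun r hr => hlam.2 hr) v
  -- combine
  rw [hE, hE, hb]
  rw [hexp]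
  have hτ' : 0 < τ := lt_of_lt_of_le (by linarith) hτ
  have hc : 0 ≤ τ / β - 1 / 2 := by
    rw [sub_nonneg, le_div_iff₀ hβ]
    linarith
  have hτbv : (τ / β) * (A.mulVec v ⬝ᵥ v) ≤ τ * (B.mulVec v ⬝ᵥ v) := by
    rw [div_mul_eq_mul_div, div_le_iff₀ hβ]
    calc τ * (A.mulVec v ⬝ᵥ v) ≤ τ * (β * (B.mulVec v ⬝ᵥ v)) := by
          exact mul_le_mul_of_nonneg_left hAβ hτ'.le
      _ = τ * (B.mulVec v ⬝ᵥ v) * β := by ring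
  have hεp : (0:ℝ) < ε ^ 2 := by positivity
  have hΔ : 0 ≤ Δt⁻¹ * (v ⬝ᵥ v) := by positivity
  have hquad : 0 ≤ (τ / β - 1 / 2) * (A.mulVec v ⬝ᵥ v) - L / (2 * ε ^ 2) * (v ⬝ᵥ v) := by
    have h1 : (τ / β - 1 / 2) * (lamMin * (v ⬝ᵥ v)) ≤ (τ / β - 1 / 2) * (A.mulVec v ⬝ᵥ v) :=
      mul_le_mul_of_nonneg_left hmin hc
    have h2 : L / (2 * ε ^ 2) * (v ⬝ᵥ v) ≤ (τ / β - 1 / 2) * lamMin * (v ⬝ᵥ v) :=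
      mul_le_mul_of_nonneg_right (by linarith) hs0
    nlinarith
  -- final arithmetic
  have hεi : 0 < 1 / ε ^ 2 := by positivity
  have hsum' : 1 / ε ^ 2 * ∑ i, F ((a + v) i) - 1 / ε ^ 2 * ∑ i, F (a i)
      ≤ 1 / ε ^ 2 * ((fun i => f (a i)) ⬝ᵥ v) + L / (2 * ε ^ 2) * (v ⬝ᵥ v) := by
    have h := mul_le_mul_of_nonneg_left hsum hεi.le
    have heq : 1 / ε ^ 2 * ((fun i => f (a i)) ⬝ᵥ v + L / 2 * (v ⬝ᵥ v))
        = 1 / ε ^ 2 * ((fun i => f (a i)) ⬝ᵥ v) + L / (2 * ε ^ 2) * (v ⬝ᵥ v) := by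
      field_simp
    rw [mul_sub] at h
    linarith [heq ▸ h]
  linarith [hsum', hquad, hτbv, key, hΔ]
end

section
/- Under the same hypotheses as the RSS-IMEX Allen-Cahn scheme with W = {0} and τ ≥ β/2, if (τ/β - 1/2)λ_min(A) - L/(2ε²) < 0, then E(u^{k+1}) ≤ E(u^k) for all k whenever 0 < Δt < 1 / (L/(2ε²) - (τ/β - 1/2)λ_min(A)). -/
open Matrix

lemma aux_rayleigh {n : ℕ} (A : Matrix (Fin n) (Fin n) ℝ) (hA : A.PosSemidef) (lamMin : ℝ)
    (hlam : IsLeast {r : ℝ | ∃ v : Fin n → ℝ, v ≠ 0 ∧ A.mulVec v = r • v} lamMin) :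
    ∀ v : Fin n → ℝ, lamMin * (v ⬝ᵥ v) ≤ A.mulVec v ⬝ᵥ v := by
  set M : Matrix (Fin n) (Fin n) ℝ := A - lamMin • (1 : Matrix (Fin n) (Fin n) ℝ) with hMdef
  have hM : M.IsHermitian := by
    simp [Matrix.IsHermitian, hMdef, conjTranspose_sub, conjTranspose_smul]
    exact (by simpa using hA.1 : A.IsSymm)
  have hMeig : ∀ i, 0 ≤ hM.eigenvalues i := by
    intro i
    have hv := hM.mulVec_eigenvectorBasis i
    have hvne : ((WithLp.equiv 2 _) (hM.eigenvectorBasis i) : Fin n → ℝ) ≠ 0 := by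
      have h0 := hM.eigenvectorBasis.orthonormal.ne_zero i
      intro h; apply h0; ext j; exact congrFun h j
    have hMv : M.mulVec ((WithLp.equiv 2 _) (hM.eigenvectorBasis i)) =
        A.mulVec ((WithLp.equiv 2 _) (hM.eigenvectorBasis i))
          - lamMin • ((WithLp.equiv 2 _) (hM.eigenvectorBasis i)) := by
      simp [hMdef, sub_mulVec, smul_mulVec]
    rw [show M.mulVec (hM.eigenvectorBasis i).ofLp = _ from hMv] at hv
    have hAw : A.mulVec ((WithLp.equiv 2 _) (hM.eigenvectorBasis i)) =
        (hM.eigenvalues i + lamMin) • ((WithLp.equiv 2 _) (hM.eigenvectorBasis i)) := by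
      rw [add_smul]; exact eq_add_of_sub_eq hv
    have hmem : lamMin ≤ hM.eigenvalues i + lamMin := hlam.2 ⟨_, hvne, hAw⟩
    linarith
  have hMpsd := hM.posSemidef_iff_eigenvalues_nonneg.mpr hMeig
  intro v
  have h0 := hMpsd.dotProduct_mulVec_nonneg v
  simp only [hMdef, sub_mulVec, smul_mulVec, one_mulVec, star_trivial,
    dotProduct_sub, dotProduct_smul, smul_eq_mul] at h0
  have hc : v ⬝ᵥ A.mulVec v = A.mulVec v ⬝ᵥ v := dotProduct_comm _ _
  linarith

lemma aux_taylor (f F : ℝ → ℝ) (L : ℝ)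
    (hF : ∀ x, HasDerivAt F (f x) x)
    (hlip : ∀ a b : ℝ, |f b - f a| ≤ L * |b - a|) (a b : ℝ) :
    F b ≤ F a + f a * (b - a) + L / 2 * (b - a) ^ 2 := by
  set g : ℝ → ℝ := fun t => F t - f a * t - L / 2 * (t - a) ^ 2 with hg
  have hg' : ∀ t, HasDerivAt g (f t - f a - L * (t - a)) t := by
    intro t
    have h2 : HasDerivAt (fun t : ℝ => f a * t) (f a) t := by
      simpa using (hasDerivAt_id t).const_mul (f a)
    have h3 : HasDerivAt (fun t : ℝ => L / 2 * (t - a) ^ 2) (L * (t - a)) t := by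
      have := (((hasDerivAt_id t).sub_const a).pow 2).const_mul (L / 2)
      refine this.congr_deriv ?_
      simp only [id]; ring
    exact ((hF t).sub h2).sub h3
  have key : g b ≤ g a := by
    rcases lt_trichotomy a b with hab | hab | hab
    · obtain ⟨c, hc, hceq⟩ := exists_hasDerivAt_eq_slope g _ hab
        (fun t _ => (hg' t).continuousAt.continuousWithinAt) (fun t _ => hg' t)
      have hba : (0:ℝ) < b - a := by linarith
      have heq : g b - g a = (f c - f a - L * (c - a)) * (b - a) :=
        ((div_eq_iff hba.ne').mp hceq.symm)
      have habs : |c - a| = c - a := abs_of_pos (by linarith [hc.1])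
      have h1 : f c - f a ≤ L * (c - a) := by
        have h := (le_abs_self (f c - f a)).trans (hlip a c)
        rw [habs] at h; exact h
      nlinarith [mul_nonpos_of_nonpos_of_nonneg
        (by linarith : f c - f a - L * (c - a) ≤ 0) hba.le]
    · simp [hab]
    · obtain ⟨c, hc, hceq⟩ := exists_hasDerivAt_eq_slope g _ hab
        (fun t _ => (hg' t).continuousAt.continuousWithinAt) (fun t _ => hg' t)
      have hab' : (0:ℝ) < a - b := by linarith
      have heq : g a - g b = (f c - f a - L * (c - a)) * (a - b) :=
        ((div_eq_iff hab'.ne').mp hceq.symm)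
      have habs : |c - a| = -(c - a) := abs_of_neg (by linarith [hc.2])
      have h1 : L * (c - a) ≤ f c - f a := by
        have h := neg_le_of_abs_le (hlip a c)
        rw [habs] at h
        nlinarith [h]
      nlinarith [mul_nonneg (by linarith : 0 ≤ f c - f a - L * (c - a)) hab'.le]
  simp only [hg] at key
  nlinarith [key]

theorem stmt_10 {n : ℕ} (A B : Matrix (Fin n) (Fin n) ℝ)
    (hA : A.PosSemidef) (hB : B.PosSemidef)
    (hkerA : ∀ v : Fin n → ℝ, A.mulVec v = 0 → v = 0)
    (hkerB : ∀ v : Fin n → ℝ, B.mulVec v = 0 → v = 0)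
    (α β : ℝ) (hα : 0 < α) (hβ : 0 < β)
    (hspec : ∀ v : Fin n → ℝ,
      α * (B.mulVec v ⬝ᵥ v) ≤ A.mulVec v ⬝ᵥ v ∧ A.mulVec v ⬝ᵥ v ≤ β * (B.mulVec v ⬝ᵥ v))
    (f F : ℝ → ℝ) (L : ℝ)
    (hF : ∀ x, HasDerivAt F (f x) x)
    (hf : Differentiable ℝ f) (hL : ∀ x, |deriv f x| ≤ L)
    (ε τ Δt : ℝ) (hε : 0 < ε)
    (lamMin : ℝ) (hlam : IsLeast {r : ℝ | ∃ v : Fin n → ℝ, v ≠ 0 ∧ A.mulVec v = r • v} lamMin)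
    (hτ : β / 2 ≤ τ)
    (hcond : (τ / β - 1 / 2) * lamMin - L / (2 * ε ^ 2) < 0)
    (hΔt : 0 < Δt)
    (hΔt' : Δt < 1 / (L / (2 * ε ^ 2) - (τ / β - 1 / 2) * lamMin))
    (u : ℕ → Fin n → ℝ)
    (hscheme : ∀ k, Δt⁻¹ • (u (k + 1) - u k)
      + τ • B.mulVec (u (k + 1) - u k) + A.mulVec (u k)
      + (1 / ε ^ 2) • (fun i => f (u k i)) = 0)
    (E : (Fin n → ℝ) → ℝ)
    (hE : ∀ v, E v = (1 / 2) * (A.mulVec v ⬝ᵥ v) + (1 / ε ^ 2) * ∑ i, F (v i)) :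
    ∀ k : ℕ, E (u (k + 1)) ≤ E (u k) := by
  have hε2 : (0:ℝ) < ε ^ 2 := by positivity
  have he0 : (0:ℝ) ≤ 1 / ε ^ 2 := by positivity
  have hlip : ∀ a b : ℝ, |f b - f a| ≤ L * |b - a| := by
    intro a b
    have := Convex.norm_image_sub_le_of_norm_deriv_le (s := (Set.univ : Set ℝ))
      (fun x _ => hf x) (fun x _ => by simpa [Real.norm_eq_abs] using hL x)
      convex_univ (Set.mem_univ a) (Set.mem_univ b)
    simpa [Real.norm_eq_abs] using this
  have hray := aux_rayleigh A hA lamMin hlam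
  have hAT : Aᵀ = A := by exact (by simpa using hA.1 : A.IsSymm)
  have hsym : ∀ v w : Fin n → ℝ, A.mulVec v ⬝ᵥ w = A.mulVec w ⬝ᵥ v := by
    intro v w
    calc A.mulVec v ⬝ᵥ w = w ⬝ᵥ A.mulVec v := dotProduct_comm _ _
      _ = A.vecMul w ⬝ᵥ v := dotProduct_mulVec w A v
      _ = (Aᵀ.mulVec w) ⬝ᵥ v := by rw [mulVec_transpose]
      _ = A.mulVec w ⬝ᵥ v := by rw [hAT]
  -- inverse time-step bound
  have hcpos : (0:ℝ) < L / (2 * ε ^ 2) - (τ / β - 1 / 2) * lamMin := by linarith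
  have hinv : L / (2 * ε ^ 2) - (τ / β - 1 / 2) * lamMin < Δt⁻¹ := by
    have h1 : (L / (2 * ε ^ 2) - (τ / β - 1 / 2) * lamMin) * Δt < 1 := by
      have h2 := mul_lt_mul_of_pos_left hΔt' hcpos
      rwa [mul_one_div, div_self hcpos.ne'] at h2
    have h3 : L / (2 * ε ^ 2) - (τ / β - 1 / 2) * lamMin < Δt⁻¹ := by
      rw [← one_div]; exact (lt_div_iff₀ hΔt).mpr h1
    exact h3
  intro k
  set d : Fin n → ℝ := u (k + 1) - u k with hd
  have hu1 : u (k + 1) = u k + d := by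
    ext i; simp [hd]
  have h0 := congrArg (fun w : Fin n → ℝ => w ⬝ᵥ d) (hscheme k)
  rw [← hd] at h0
  simp only [add_dotProduct, smul_dotProduct, zero_dotProduct, smul_eq_mul] at h0
  -- quadratic expansion
  have hquad : A.mulVec (u (k + 1)) ⬝ᵥ u (k + 1) =
      A.mulVec (u k) ⬝ᵥ u k + 2 * (A.mulVec (u k) ⬝ᵥ d) + A.mulVec d ⬝ᵥ d := by
    rw [hu1]
    simp only [mulVec_add, add_dotProduct, dotProduct_add]
    have := hsym d (u k)
    linarith
  -- Taylor sum bound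
  have hFsum : ∑ i, F (u (k + 1) i) ≤
      ∑ i, F (u k i) + ((fun i => f (u k i)) ⬝ᵥ d) + L / 2 * (d ⬝ᵥ d) := by
    have hpt : ∀ i, F (u (k + 1) i) ≤ F (u k i) + f (u k i) * d i + L / 2 * (d i) ^ 2 := by
      intro i
      have h := aux_taylor f F L hF hlip (u k i) (u (k + 1) i)
      have hdi : u (k + 1) i - u k i = d i := by simp [hd]
      rw [hdi] at h; exact h
    calc ∑ i, F (u (k + 1) i)
        ≤ ∑ i, (F (u k i) + f (u k i) * d i + L / 2 * (d i) ^ 2) :=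
          Finset.sum_le_sum fun i _ => hpt i
      _ = ∑ i, F (u k i) + ((fun i => f (u k i)) ⬝ᵥ d) + L / 2 * (d ⬝ᵥ d) := by
          simp only [dotProduct, Finset.mul_sum, ← Finset.sum_add_distrib]
          apply Finset.sum_congr rfl
          intros; ring
  have hP : (0:ℝ) ≤ d ⬝ᵥ d := Finset.sum_nonneg fun i _ => mul_self_nonneg (d i)
  have hQβ := (hspec d).2
  have hlam' := hray d
  -- coefficient estimates
  have hτβ : (1:ℝ) / 2 ≤ τ / β := by rw [le_div_iff₀ hβ]; linarith
  have hτ0 : (0:ℝ) ≤ τ := by linarith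
  have hτR : τ / β * (A.mulVec d ⬝ᵥ d) ≤ τ * (B.mulVec d ⬝ᵥ d) := by
    have h1 : A.mulVec d ⬝ᵥ d / β ≤ B.mulVec d ⬝ᵥ d := by
      rw [div_le_iff₀ hβ]; linarith
    calc τ / β * (A.mulVec d ⬝ᵥ d) = τ * (A.mulVec d ⬝ᵥ d / β) := by ring
      _ ≤ τ * (B.mulVec d ⬝ᵥ d) := mul_le_mul_of_nonneg_left h1 hτ0
  have hmix : (1 / 2 - τ / β) * (A.mulVec d ⬝ᵥ d) ≤
      (1 / 2 - τ / β) * (lamMin * (d ⬝ᵥ d)) :=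
    mul_le_mul_of_nonpos_left hlam' (by linarith)
  have hee : L / (2 * ε ^ 2) = 1 / ε ^ 2 * (L / 2) := by ring
  have hcoef : (1 / 2 - τ / β) * lamMin + 1 / ε ^ 2 * (L / 2) - Δt⁻¹ ≤ 0 := by
    rw [← hee]; linarith
  have hfinal : 1 / 2 * (A.mulVec d ⬝ᵥ d) - τ * (B.mulVec d ⬝ᵥ d)
      + (1 / ε ^ 2 * (L / 2) - Δt⁻¹) * (d ⬝ᵥ d) ≤ 0 := by
    have h2 : (1 / 2 - τ / β) * (lamMin * (d ⬝ᵥ d))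
        + (1 / ε ^ 2 * (L / 2) - Δt⁻¹) * (d ⬝ᵥ d)
        = ((1 / 2 - τ / β) * lamMin + 1 / ε ^ 2 * (L / 2) - Δt⁻¹) * (d ⬝ᵥ d) := by ring
    have h3 : ((1 / 2 - τ / β) * lamMin + 1 / ε ^ 2 * (L / 2) - Δt⁻¹) * (d ⬝ᵥ d) ≤ 0 :=
      mul_nonpos_of_nonpos_of_nonneg hcoef hP
    linarith [hτR, hmix]
  -- put it together
  rw [hE (u (k + 1)), hE (u k)]
  have hFe : 1 / ε ^ 2 * ∑ i, F (u (k + 1) i) ≤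
      1 / ε ^ 2 * (∑ i, F (u k i) + ((fun i => f (u k i)) ⬝ᵥ d) + L / 2 * (d ⬝ᵥ d)) :=
    mul_le_mul_of_nonneg_left hFsum he0
  nlinarith [hquad, hFe, h0, hfinal, hP]
end

section
/- Let A, B be symmetric positive semidefinite with Ker(A) = Ker(B) = {0} and α⟨Bu,u⟩ ≤ ⟨Au,u⟩ ≤ β⟨Bu,u⟩ (α,β > 0). For the RSS-IMEX Allen-Cahn scheme with 0 ≤ τ < β/2, energy decrease E(u^{k+1}) ≤ E(u^k) holds provided 0 < Δt < 1 / (L/(2ε²) - (τ/β - 1/2)ρ(A)), where ρ(A) is the spectral radius of A. -/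
open Matrix
open scoped RealInnerProductSpace

lemma taylor_ub (f F : ℝ → ℝ) (L : ℝ) (hF : ∀ x, HasDerivAt F (f x) x)
    (hf : Differentiable ℝ f) (hL : ∀ x, |deriv f x| ≤ L) (a b : ℝ) :
    F b - F a ≤ f a * (b - a) + L / 2 * (b - a) ^ 2 := by
  have hL0 : 0 ≤ L := le_trans (abs_nonneg _) (hL 0)
  have lip : LipschitzWith ⟨L, hL0⟩ f := by
    apply lipschitzWith_of_nnnorm_deriv_le hf
    intro x
    have := hL x
    exact (NNReal.coe_le_coe (r₁ := ‖deriv f x‖₊) (r₂ := ⟨L, hL0⟩)).mp (by rw [coe_nnnorm, Real.norm_eq_abs]; exact this)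
  have hfd : ∀ t, |f t - f a| ≤ L * |t - a| := by
    intro t
    have := lip.dist_le_mul t a
    rw [Real.dist_eq, Real.dist_eq] at this; exact this
  have hFTC : ∀ c d : ℝ, (∫ t in c..d, f t) = F d - F c := fun c d =>
    intervalIntegral.integral_eq_sub_of_hasDerivAt (fun t _ => hF t)
      (hf.continuous.intervalIntegrable c d)
  rcases le_or_gt a b with hab | hab
  · have h1 : (∫ t in a..b, f t) ≤ ∫ t in a..b, (f a + L * (t - a)) := by
      apply intervalIntegral.integral_mono_on hab
        (hf.continuous.intervalIntegrable a b)
        (by apply Continuous.intervalIntegrable; continuity)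
      intro t ht
      have := abs_le.mp (hfd t)
      have h2 : |t - a| = t - a := abs_of_nonneg (by linarith [ht.1])
      rw [h2] at this
      linarith [this.2]
    have h2 : (∫ t in a..b, (f a + L * (t - a))) = f a * (b - a) + L / 2 * (b - a) ^ 2 := by
      have : ∀ t ∈ Set.uIcc a b, HasDerivAt (fun s => f a * s + L / 2 * (s - a) ^ 2)
          (f a + L * (t - a)) t := by
        intro t _
        have h3 : HasDerivAt (fun s : ℝ => f a * s) (f a) t := by
          simpa using (hasDerivAt_id t).const_mul (f a)
        have h4 : HasDerivAt (fun s : ℝ => L / 2 * (s - a) ^ 2) (L * (t - a)) t := by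
          have h5 : HasDerivAt (fun s : ℝ => (s - a) ^ 2) (2 * (t - a)) t := by
            simpa using ((hasDerivAt_id t).sub_const a).fun_pow 2
          have := h5.const_mul (L / 2)
          exact this.congr_deriv (by ring)
        exact h3.add h4
      rw [intervalIntegral.integral_eq_sub_of_hasDerivAt this
        (by apply Continuous.intervalIntegrable; continuity)]
      ring
    rw [hFTC a b] at h1
    linarith [h1, h2 ▸ h1]
  · have h1 : (∫ t in b..a, (f a - L * (a - t))) ≤ ∫ t in b..a, f t := by
      apply intervalIntegral.integral_mono_on hab.le
        (by apply Continuous.intervalIntegrable; continuity)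
        (hf.continuous.intervalIntegrable b a)
      intro t ht
      have := abs_le.mp (hfd t)
      have h2 : |t - a| = a - t := by
        rw [abs_sub_comm]; exact abs_of_nonneg (by linarith [ht.2])
      rw [h2] at this
      linarith [this.1]
    have h2 : (∫ t in b..a, (f a - L * (a - t))) = f a * (a - b) - L / 2 * (a - b) ^ 2 := by
      have : ∀ t ∈ Set.uIcc b a, HasDerivAt (fun s => f a * s + L / 2 * (a - s) ^ 2)
          (f a - L * (a - t)) t := by
        intro t _
        have h3 : HasDerivAt (fun s : ℝ => f a * s) (f a) t := by
          simpa using (hasDerivAt_id t).const_mul (f a)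
        have h4 : HasDerivAt (fun s : ℝ => L / 2 * (a - s) ^ 2) (-(L * (a - t))) t := by
          have h5 : HasDerivAt (fun s : ℝ => (a - s) ^ 2) (2 * (a - t) * (-1)) t := by
            simpa using ((hasDerivAt_id t).const_sub a).fun_pow 2
          have := h5.const_mul (L / 2)
          exact this.congr_deriv (by ring)
        exact (h3.fun_add h4).congr_deriv (by ring)
      rw [intervalIntegral.integral_eq_sub_of_hasDerivAt this
        (by apply Continuous.intervalIntegrable; continuity)]
      ring
    rw [hFTC b a] at h1
    nlinarith [h1, h2 ▸ h1, sq_nonneg (a - b)]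

lemma rayleigh_bound {n : ℕ} (A : Matrix (Fin n) (Fin n) ℝ) (hA : A.IsHermitian)
    (ρA : ℝ) (hub : ∀ r : ℝ, (∃ v : Fin n → ℝ, v ≠ 0 ∧ A.mulVec v = r • v) → r ≤ ρA)
    (v : Fin n → ℝ) : A.mulVec v ⬝ᵥ v ≤ ρA * (v ⬝ᵥ v) := by
  classical
  set e := hA.eigenvectorBasis with he
  have hEV : ∀ i, hA.eigenvalues i ≤ ρA := fun i =>
    hub _ ⟨⇑(e i), fun h => by
      have := e.orthonormal.ne_zero i
      exact this (by ext j; exact congrFun h j), hA.mulVec_eigenvectorBasis i⟩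
  set x : EuclideanSpace ℝ (Fin n) := (WithLp.equiv 2 (Fin n → ℝ)).symm v with hx
  have hs : (Matrix.toEuclideanLin A).IsSymmetric := Matrix.isHermitian_iff_isSymmetric.mp hA
  set T := Matrix.toEuclideanLin A with hT
  have hTe : ∀ i, T (e i) = hA.eigenvalues i • (e i) := by
    intro i
    apply (WithLp.equiv 2 (Fin n → ℝ)).injective
    have := hA.mulVec_eigenvectorBasis i
    simpa [hT, Matrix.toEuclideanLin_apply] using this
  have hdot : A.mulVec v ⬝ᵥ v = ⟪T x, x⟫ := by
    simp [hT, Matrix.toEuclideanLin_apply, hx, PiLp.inner_apply, dotProduct,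
      RCLike.inner_apply, mul_comm]
  have hxx : v ⬝ᵥ v = ⟪x, x⟫ := by
    rw [hx, real_inner_self_eq_norm_sq, EuclideanSpace.norm_sq_eq]; unfold dotProduct; congr 1; ext i; simp [Real.norm_eq_abs, sq_abs, sq]
  rw [hdot, hxx]
  have h1 : ⟪T x, x⟫ = ∑ i, hA.eigenvalues i * (⟪e i, x⟫ * ⟪e i, x⟫) := by
    rw [← e.sum_inner_mul_inner (T x) x]
    congr 1; ext i
    rw [show ⟪T x, e i⟫ = ⟪x, T (e i)⟫ from hs x (e i), hTe i,
      real_inner_smul_right, real_inner_comm]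
    ring
  have h2 : ⟪x, x⟫ = ∑ i, ⟪e i, x⟫ * ⟪e i, x⟫ := by
    rw [← e.sum_inner_mul_inner x x]
    congr 1; ext i; rw [real_inner_comm x (e i)]
  rw [h1, h2, Finset.mul_sum]
  apply Finset.sum_le_sum
  intro i _
  exact mul_le_mul_of_nonneg_right (hEV i) (mul_self_nonneg _)

theorem stmt_11 {n : ℕ} (A B : Matrix (Fin n) (Fin n) ℝ)
    (hA : A.PosSemidef) (hB : B.PosSemidef)
    (hkerA : ∀ v : Fin n → ℝ, A.mulVec v = 0 → v = 0)
    (hkerB : ∀ v : Fin n → ℝ, B.mulVec v = 0 → v = 0)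
    (α β : ℝ) (hα : 0 < α) (hβ : 0 < β)
    (hspec : ∀ v : Fin n → ℝ,
      α * (B.mulVec v ⬝ᵥ v) ≤ A.mulVec v ⬝ᵥ v ∧ A.mulVec v ⬝ᵥ v ≤ β * (B.mulVec v ⬝ᵥ v))
    (f F : ℝ → ℝ) (L : ℝ)
    (hF : ∀ x, HasDerivAt F (f x) x)
    (hf : Differentiable ℝ f) (hL : ∀ x, |deriv f x| ≤ L)
    (ε τ Δt : ℝ) (hε : 0 < ε)
    (ρA : ℝ) (hρ : IsGreatest {r : ℝ | ∃ v : Fin n → ℝ, v ≠ 0 ∧ A.mulVec v = r • v} ρA)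
    (hτ0 : 0 ≤ τ) (hτ : τ < β / 2)
    (hΔt : 0 < Δt)
    (hΔt' : Δt < 1 / (L / (2 * ε ^ 2) - (τ / β - 1 / 2) * ρA))
    (u : ℕ → Fin n → ℝ)
    (hscheme : ∀ k, Δt⁻¹ • (u (k + 1) - u k)
      + τ • B.mulVec (u (k + 1) - u k) + A.mulVec (u k)
      + (1 / ε ^ 2) • (fun i => f (u k i)) = 0)
    (E : (Fin n → ℝ) → ℝ)
    (hE : ∀ v, E v = (1 / 2) * (A.mulVec v ⬝ᵥ v) + (1 / ε ^ 2) * ∑ i, F (v i)) :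
    ∀ k : ℕ, E (u (k + 1)) ≤ E (u k) := by
  -- positivity of the time-step constant
  have hc : 0 < L / (2 * ε ^ 2) - (τ / β - 1 / 2) * ρA := by
    by_contra h
    push_neg at h
    have : 1 / (L / (2 * ε ^ 2) - (τ / β - 1 / 2) * ρA) ≤ 0 := one_div_nonpos.mpr h
    linarith
  have hcΔ : L / (2 * ε ^ 2) - (τ / β - 1 / 2) * ρA < Δt⁻¹ := by
    have h1 : Δt * (L / (2 * ε ^ 2) - (τ / β - 1 / 2) * ρA) < 1 := (lt_div_iff₀ hc).mp hΔt'
    rw [← one_div, lt_div_iff₀ hΔt]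
    nlinarith
  have hAsymm : Aᵀ = A := by
    ext i j
    have := congrFun (congrFun hA.1 i) j
    simpa [Matrix.conjTranspose_apply] using this
  intro k
  set a := u k with ha
  set w : Fin n → ℝ := u (k + 1) - u k with hw
  have hb : u (k + 1) = a + w := by rw [hw, ha]; abel
  have hε2 : (0:ℝ) < ε ^ 2 := by positivity
  -- the scheme dotted with w
  have key := congrArg (fun z => z ⬝ᵥ w) (hscheme k)
  simp only [add_dotProduct, smul_dotProduct, zero_dotProduct,
    smul_eq_mul] at key
  rw [← hw, ← ha] at key
  -- quadratic expansion
  have hsym : A.mulVec w ⬝ᵥ a = A.mulVec a ⬝ᵥ w := by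
    rw [dotProduct_comm, Matrix.dotProduct_mulVec, ← Matrix.mulVec_transpose, hAsymm]
  have hQ : A.mulVec (u (k + 1)) ⬝ᵥ (u (k + 1))
      = A.mulVec a ⬝ᵥ a + 2 * (A.mulVec a ⬝ᵥ w) + A.mulVec w ⬝ᵥ w := by
    rw [hb, Matrix.mulVec_add, add_dotProduct, dotProduct_add,
      dotProduct_add, hsym]
    ring
  -- sum expansion
  have hS : ∑ i, F (u (k + 1) i) ≤ ∑ i, F (a i)
      + ((fun i => f (a i)) ⬝ᵥ w) + L / 2 * (w ⬝ᵥ w) := by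
    have h1 : ∀ i, F (u (k + 1) i) ≤ F (a i) + f (a i) * w i + L / 2 * (w i * w i) := by
      intro i
      have := taylor_ub f F L hF hf hL (a i) (u (k + 1) i)
      have hwi : u (k + 1) i - a i = w i := by rw [hb]; simp
      rw [hwi] at this
      nlinarith [this, sq_nonneg (w i)]
    calc ∑ i, F (u (k + 1) i) ≤ ∑ i, (F (a i) + f (a i) * w i + L / 2 * (w i * w i)) :=
          Finset.sum_le_sum fun i _ => h1 i
      _ = ∑ i, F (a i) + ((fun i => f (a i)) ⬝ᵥ w) + L / 2 * (w ⬝ᵥ w) := by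
          simp [Finset.sum_add_distrib, dotProduct, Finset.mul_sum]
  have hw0 : (0:ℝ) ≤ w ⬝ᵥ w := Finset.sum_nonneg fun i _ => mul_self_nonneg _
  -- eigenvalue bound
  have hAw : A.mulVec w ⬝ᵥ w ≤ ρA * (w ⬝ᵥ w) :=
    rayleigh_bound A hA.1 ρA (fun r hr => hρ.2 hr) w
  have h12 : (0:ℝ) ≤ 1 / 2 - τ / β := by
    have : τ / β < 1 / 2 := by rw [div_lt_iff₀ hβ] at *; linarith
    linarith
  have hτB : τ / β * (A.mulVec w ⬝ᵥ w) ≤ τ * (B.mulVec w ⬝ᵥ w) := by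
    have h1 := mul_le_mul_of_nonneg_left (hspec w).2 (div_nonneg hτ0 hβ.le)
    have h2 : τ / β * (β * (B.mulVec w ⬝ᵥ w)) = τ * (B.mulVec w ⬝ᵥ w) := by
      field_simp
    linarith
  have hA2 : (1 / 2 - τ / β) * (A.mulVec w ⬝ᵥ w) ≤ (1 / 2 - τ / β) * (ρA * (w ⬝ᵥ w)) :=
    mul_le_mul_of_nonneg_left hAw h12
  have hS' := mul_le_mul_of_nonneg_left hS (by positivity : (0:ℝ) ≤ 1 / ε ^ 2)
  have hfin := mul_nonneg (sub_nonneg.mpr hcΔ.le) hw0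
  have hnorm : L / (2 * ε ^ 2) = L / 2 * (1 / ε ^ 2) := by ring
  rw [hnorm] at hfin
  rw [hE, hE, hQ]
  linarith [key, hS', hA2, hτB, hfin]
end

section
/- Let A₁,...,A_m and B₁,...,B_m be symmetric positive semidefinite n×n matrices with Ker(A_i) = Ker(B_i) = W for all i, and with α_i⟨B_iu,u⟩ ≤ ⟨A_iu,u⟩ ≤ β_i⟨B_iu,u⟩ for all u (α_i, β_i > 0). Consider the m-stage RSS splitting scheme where each substep is u^{new} = u^{old} - Δt(I + τ_iΔt B_i)^{-1} A_i u^{old}. If τ_i ≥ β_i/2 for all i, then each substep is unconditionally stable in the energy ⟨A_i u, u⟩; if some τ_i < β_i/2, stability holds provided 0 < Δt < min_i 2/((1 - 2τ_i/β_i)ρ(A_i)). Moreover u^{k+1} - u^k ∈ W^⊥ for all k. -/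
open Matrix

lemma symm_dot {N : ℕ} {A : Matrix (Fin N) (Fin N) ℝ} (h : Aᵀ = A)
    (y z : Fin N → ℝ) : A *ᵥ y ⬝ᵥ z = y ⬝ᵥ A *ᵥ z := by
  nth_rewrite 1 [← h]
  rw [mulVec_transpose, ← dotProduct_mulVec]

lemma herm_t {N : ℕ} {A : Matrix (Fin N) (Fin N) ℝ} (h : A.IsHermitian) : Aᵀ = A := by
  simpa [conjTranspose_eq_transpose_of_trivial] using h.eq

lemma psd_smul {N : ℕ} {B : Matrix (Fin N) (Fin N) ℝ} (hB : B.PosSemidef) {c : ℝ}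
    (hc : 0 ≤ c) : (c • B).PosSemidef := by
  have h1 : (c • B).IsHermitian := by
    show (c • B)ᴴ = c • B
    rw [conjTranspose_smul, star_trivial, hB.1.eq]
  refine .of_dotProduct_mulVec_nonneg h1 fun x => ?_
  rw [smul_mulVec, dotProduct_smul]
  exact mul_nonneg hc (hB.dotProduct_mulVec_nonneg x)

lemma dot_self_nonneg {N : ℕ} (v : Fin N → ℝ) : 0 ≤ v ⬝ᵥ v := by
  simpa using dotProduct_self_star_nonneg v

lemma rayleigh {N : ℕ} {A : Matrix (Fin N) (Fin N) ℝ} (hA : A.IsHermitian) (ρ : ℝ)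
    (hub : ∀ r : ℝ, (∃ v : Fin N → ℝ, v ≠ 0 ∧ A *ᵥ v = r • v) → r ≤ ρ)
    (d : Fin N → ℝ) : A *ᵥ d ⬝ᵥ d ≤ ρ * (d ⬝ᵥ d) := by
  have hM : (ρ • (1 : Matrix (Fin N) (Fin N) ℝ) - A).IsHermitian := by
    have h1 : (ρ • (1 : Matrix (Fin N) (Fin N) ℝ)).IsHermitian := by
      show _ᴴ = _
      rw [conjTranspose_smul, star_trivial, conjTranspose_one]
    exact h1.sub hA
  have hpsd : (ρ • (1 : Matrix (Fin N) (Fin N) ℝ) - A).PosSemidef := by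
    simp only [hM.posSemidef_iff_eigenvalues_nonneg, Pi.le_def, Pi.zero_apply]
    intro j
    set w : Fin N → ℝ := ⇑(hM.eigenvectorBasis j) with hw
    have hwne : w ≠ 0 := by
      intro h0
      exact hM.eigenvectorBasis.orthonormal.ne_zero j (by ext t; exact congrFun h0 t)
    have hmv := hM.mulVec_eigenvectorBasis j
    have hAw : A *ᵥ w = (ρ - hM.eigenvalues j) • w := by
      have h2 : (ρ • (1 : Matrix (Fin N) (Fin N) ℝ) - A) *ᵥ w = hM.eigenvalues j • w := hmv
      rw [sub_mulVec, smul_mulVec, one_mulVec] at h2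
      funext t
      have ht := congrFun h2 t
      simp only [Pi.smul_apply, Pi.sub_apply, smul_eq_mul] at *
      linarith
    have := hub _ ⟨w, hwne, hAw⟩
    linarith
  have h2 := hpsd.dotProduct_mulVec_nonneg d
  simp only [star_trivial, sub_mulVec, smul_mulVec, one_mulVec, dotProduct_sub,
    dotProduct_smul, smul_eq_mul] at h2
  rw [dotProduct_comm d (A *ᵥ d)] at h2
  linarith [h2]


lemma energy_decay {Δt τ β ρ axd add bdd dd : ℝ} (hΔt : 0 < Δt) (hτ : 0 ≤ τ) (hβ : 0 < β)
    (hkey : Δt * axd = -(dd + τ * Δt * bdd)) (hadd0 : 0 ≤ add) (hbdd0 : 0 ≤ bdd)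
    (hdd0 : 0 ≤ dd) (hb : add ≤ β * bdd) (hray : add ≤ ρ * dd) (hρ : 0 ≤ ρ)
    (h2 : τ < β / 2 → Δt * ((1 - 2 * τ / β) * ρ) ≤ 2) : 2 * axd + add ≤ 0 := by
  suffices h : Δt * (2 * axd + add) ≤ 0 by
    by_contra hcon
    push_neg at hcon
    nlinarith [mul_pos hΔt hcon]
  by_cases hcase : τ < β / 2
  · have hc : 0 < 1 - 2 * τ / β := by
      rw [sub_pos, div_lt_one hβ]; linarith
    have h2' := h2 hcase
    have e1 : (Δt * (1 - 2 * τ / β)) * add ≤ (Δt * (1 - 2 * τ / β)) * (ρ * dd) :=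
      mul_le_mul_of_nonneg_left hray (mul_nonneg hΔt.le hc.le)
    have e1'' : (Δt * ((1 - 2 * τ / β) * ρ)) * dd ≤ 2 * dd :=
      mul_le_mul_of_nonneg_right h2' hdd0
    have e2 : τ / β * add ≤ τ / β * (β * bdd) :=
      mul_le_mul_of_nonneg_left hb (div_nonneg hτ hβ.le)
    have hβ' : β ≠ 0 := hβ.ne'
    have e2' : τ / β * (β * bdd) = τ * bdd := by
      field_simp
    have E1 : (Δt * (1 - 2 * τ / β)) * add ≤ 2 * dd := by
      calc (Δt * (1 - 2 * τ / β)) * add ≤ (Δt * (1 - 2 * τ / β)) * (ρ * dd) := e1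
        _ = (Δt * ((1 - 2 * τ / β) * ρ)) * dd := by ring
        _ ≤ 2 * dd := e1''
    have E2 : τ / β * add ≤ τ * bdd := e2'.symm ▸ e2
    have hsplit : Δt * add = (Δt * (1 - 2 * τ / β)) * add + 2 * Δt * (τ / β * add) := by
      ring
    nlinarith [hkey, E1, E2, hsplit, mul_le_mul_of_nonneg_left E2 (by linarith : (0:ℝ) ≤ 2 * Δt)]
  · push_neg at hcase
    have e1 : Δt * add ≤ Δt * (β * bdd) := mul_le_mul_of_nonneg_left hb hΔt.le
    have e2 : Δt * (β * bdd) ≤ Δt * (2 * τ * bdd) := by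
      apply mul_le_mul_of_nonneg_left _ hΔt.le
      nlinarith
    nlinarith [hkey, e1, e2]

theorem stmt_17 {n m : ℕ} (A B : Fin m → Matrix (Fin n) (Fin n) ℝ)
    (hA : ∀ i, (A i).PosSemidef) (hB : ∀ i, (B i).PosSemidef)
    (W : Submodule ℝ (Fin n → ℝ))
    (hkerA : ∀ i, ∀ v, (A i).mulVec v = 0 ↔ v ∈ W)
    (hkerB : ∀ i, ∀ v, (B i).mulVec v = 0 ↔ v ∈ W)
    (α β : Fin m → ℝ) (hα : ∀ i, 0 < α i) (hβ : ∀ i, 0 < β i)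
    (hspec : ∀ i, ∀ v : Fin n → ℝ,
      α i * ((B i).mulVec v ⬝ᵥ v) ≤ (A i).mulVec v ⬝ᵥ v ∧
        (A i).mulVec v ⬝ᵥ v ≤ β i * ((B i).mulVec v ⬝ᵥ v))
    (ρA : Fin m → ℝ)
    (hρ : ∀ i, IsGreatest {r : ℝ | ∃ v : Fin n → ℝ, v ≠ 0 ∧ (A i).mulVec v = r • v} (ρA i))
    (τ : Fin m → ℝ) (hτ0 : ∀ i, 0 ≤ τ i) (Δt : ℝ) (hΔt : 0 < Δt)
    (hcond : ∀ i, τ i < β i / 2 → Δt < 2 / ((1 - 2 * τ i / β i) * ρA i))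
    (u : ℕ → Fin n → ℝ) (v : ℕ → ℕ → Fin n → ℝ)
    (hv0 : ∀ k, v k 0 = u k) (hvm : ∀ k, v k m = u (k + 1))
    (hsub : ∀ k, ∀ i : Fin m,
      v k (i + 1) = v k i
        - Δt • ((1 + (τ i * Δt) • B i)⁻¹).mulVec ((A i).mulVec (v k i))) :
    (∀ k, ∀ i : Fin m,
        (A i).mulVec (v k (i + 1)) ⬝ᵥ v k (i + 1) ≤ (A i).mulVec (v k i) ⬝ᵥ v k i) ∧
      (∀ k : ℕ, ∀ w ∈ W, (u (k + 1) - u k) ⬝ᵥ w = 0) := by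
  -- properties of C i = 1 + (τ i * Δt) • B i
  have hCpd : ∀ i : Fin m, (1 + (τ i * Δt) • B i).PosDef := fun i =>
    Matrix.PosDef.one.add_posSemidef (psd_smul (hB i) (mul_nonneg (hτ0 i) hΔt.le))
  have hdet : ∀ i : Fin m, IsUnit (1 + (τ i * Δt) • B i).det := fun i =>
    isUnit_iff_ne_zero.mpr (hCpd i).det_pos.ne'
  have hCt : ∀ i : Fin m, (1 + (τ i * Δt) • B i)ᵀ = 1 + (τ i * Δt) • B i := fun i =>
    herm_t (hCpd i).1
  have hCit : ∀ i : Fin m, ((1 + (τ i * Δt) • B i)⁻¹)ᵀ = (1 + (τ i * Δt) • B i)⁻¹ := by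
    intro i
    rw [transpose_nonsing_inv, hCt i]
  have hCC : ∀ i : Fin m, (1 + (τ i * Δt) • B i) * (1 + (τ i * Δt) • B i)⁻¹ = 1 := fun i =>
    mul_nonsing_inv _ (hdet i)
  have hCC' : ∀ i : Fin m, (1 + (τ i * Δt) • B i)⁻¹ * (1 + (τ i * Δt) • B i) = 1 := fun i =>
    nonsing_inv_mul _ (hdet i)
  -- the increment equation
  have hstep : ∀ k, ∀ i : Fin m,
      (1 + (τ i * Δt) • B i) *ᵥ (v k (↑i + 1) - v k i) = -(Δt • ((A i) *ᵥ (v k i))) := by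
    intro k i
    have h1 : v k (↑i + 1) - v k i
        = -(Δt • ((1 + (τ i * Δt) • B i)⁻¹ *ᵥ ((A i) *ᵥ (v k i)))) := by
      rw [hsub k i]; abel
    rw [h1, mulVec_neg, mulVec_smul, mulVec_mulVec, hCC i, one_mulVec]
  constructor
  · -- energy decay
    intro k i
    have hx : v k (↑i : ℕ) = v k (↑i : ℕ) := rfl
    -- increment
    have hv' : v k (↑i + 1) = v k ↑i + (v k (↑i + 1) - v k ↑i) := by abel
    have hexp : (A i) *ᵥ (v k (↑i + 1)) ⬝ᵥ v k (↑i + 1)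
        = (A i) *ᵥ (v k ↑i) ⬝ᵥ (v k ↑i)
          + 2 * ((A i) *ᵥ (v k ↑i) ⬝ᵥ (v k (↑i + 1) - v k ↑i))
          + ((A i) *ᵥ (v k (↑i + 1) - v k ↑i) ⬝ᵥ (v k (↑i + 1) - v k ↑i)) := by
      have hsw : (A i) *ᵥ (v k (↑i + 1) - v k ↑i) ⬝ᵥ (v k ↑i)
          = (A i) *ᵥ (v k ↑i) ⬝ᵥ (v k (↑i + 1) - v k ↑i) := by
        rw [symm_dot (herm_t (hA i).1), dotProduct_comm]
      nth_rewrite 1 2 [hv']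
      rw [mulVec_add, add_dotProduct, dotProduct_add, dotProduct_add, hsw]
      ring
    have hkey : Δt * ((A i) *ᵥ (v k ↑i) ⬝ᵥ (v k (↑i + 1) - v k ↑i))
        = -((v k (↑i + 1) - v k ↑i) ⬝ᵥ (v k (↑i + 1) - v k ↑i)
            + (τ i * Δt) * ((B i) *ᵥ (v k (↑i + 1) - v k ↑i) ⬝ᵥ (v k (↑i + 1) - v k ↑i))) := by
      have h1 := congrArg (fun z => z ⬝ᵥ (v k (↑i + 1) - v k ↑i)) (hstep k i)
      simp only [add_mulVec, one_mulVec, smul_mulVec, add_dotProduct,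
        smul_dotProduct, smul_eq_mul, neg_dotProduct] at h1
      linarith [h1]
    have hadd0 : 0 ≤ (A i) *ᵥ (v k (↑i + 1) - v k ↑i) ⬝ᵥ (v k (↑i + 1) - v k ↑i) := by
      have h := (hA i).dotProduct_mulVec_nonneg (v k (↑i + 1) - v k ↑i)
      rwa [star_trivial, dotProduct_comm] at h
    have hbdd0 : 0 ≤ (B i) *ᵥ (v k (↑i + 1) - v k ↑i) ⬝ᵥ (v k (↑i + 1) - v k ↑i) := by
      have h := (hB i).dotProduct_mulVec_nonneg (v k (↑i + 1) - v k ↑i)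
      rwa [star_trivial, dotProduct_comm] at h
    have hρnn : 0 ≤ ρA i := by
      obtain ⟨v0, hv0ne, hev⟩ := (hρ i).1
      have h1 : (A i) *ᵥ v0 ⬝ᵥ v0 = ρA i * (v0 ⬝ᵥ v0) := by
        rw [hev, smul_dotProduct, smul_eq_mul]
      have h2 : 0 < v0 ⬝ᵥ v0 := by
        rcases (dot_self_nonneg v0).lt_or_eq with h | h
        · exact h
        · exact absurd (dotProduct_self_eq_zero.mp h.symm) hv0ne
      have h3 : 0 ≤ (A i) *ᵥ v0 ⬝ᵥ v0 := by
        have h := (hA i).dotProduct_mulVec_nonneg v0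
        rwa [star_trivial, dotProduct_comm] at h
      nlinarith
    have hray := rayleigh (hA i).1 (ρA i) (fun r hr => (hρ i).2 hr) (v k (↑i + 1) - v k ↑i)
    have h2 : τ i < β i / 2 → Δt * ((1 - 2 * τ i / β i) * ρA i) ≤ 2 := by
      intro hcase
      have hc : 0 < 1 - 2 * τ i / β i := by
        rw [sub_pos, div_lt_one (hβ i)]; linarith
      rcases eq_or_lt_of_le hρnn with h0 | h0
      · rw [← h0]; simp
      · have hlt := hcond i hcase
        have hpos : 0 < (1 - 2 * τ i / β i) * ρA i := mul_pos hc h0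
        linarith [(lt_div_iff₀ hpos).mp hlt]
    have hfin := energy_decay hΔt (hτ0 i) (hβ i) hkey hadd0 hbdd0
      (dot_self_nonneg _) (hspec i _).2 hray hρnn h2
    rw [hexp]
    linarith
  · -- orthogonality of increments to W
    intro k w hw
    have key : ∀ j, j ≤ m → (v k j - v k 0) ⬝ᵥ w = 0 := by
      intro j
      induction j with
      | zero => intro _; simp
      | succ j ih =>
        intro hj
        have hjm : j < m := Nat.lt_of_lt_of_le (Nat.lt_succ_self j) hj
        have ihj := ih (Nat.le_of_lt hjm)
        set i : Fin m := ⟨j, hjm⟩ with hi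
        have hji : (↑i : ℕ) = j := rfl
        -- the increment at this substep
        have hBw : (B i) *ᵥ w = 0 := (hkerB i w).mpr hw
        have hAw : (A i) *ᵥ w = 0 := (hkerA i w).mpr hw
        have hCw : (1 + (τ i * Δt) • B i) *ᵥ w = w := by
          rw [add_mulVec, one_mulVec, smul_mulVec, hBw, smul_zero, add_zero]
        have hCiw : (1 + (τ i * Δt) • B i)⁻¹ *ᵥ w = w := by
          conv_lhs => rw [← hCw, mulVec_mulVec, hCC' i, one_mulVec]
        have hinc : ((1 + (τ i * Δt) • B i)⁻¹ *ᵥ ((A i) *ᵥ (v k j))) ⬝ᵥ w = 0 := by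
          rw [symm_dot (hCit i), hCiw, symm_dot (herm_t (hA i).1), hAw, dotProduct_zero]
        have hsubj : v k (j + 1) = v k j
            - Δt • ((1 + (τ i * Δt) • B i)⁻¹ *ᵥ ((A i) *ᵥ (v k j))) := hsub k i
        rw [hsubj]
        have : (v k j - Δt • ((1 + (τ i * Δt) • B i)⁻¹ *ᵥ ((A i) *ᵥ (v k j))) - v k 0)
            = (v k j - v k 0) - Δt • ((1 + (τ i * Δt) • B i)⁻¹ *ᵥ ((A i) *ᵥ (v k j))) := by
          abel
        rw [this, sub_dotProduct, ihj, smul_dotProduct, smul_eq_mul, hinc, mul_zero, sub_zero]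
    have h1 := key m le_rfl
    rw [hvm k, hv0 k] at h1
    exact h1
end
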